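/- Let m ≥ 1 and t ≥ 1, let 0 < ε ≤ 1, and let μ be a probability measure on Fin m with |μ {j} − 1/m| ≤ ε/(4m) for every j. Write P j = μ {j} and define, on the product space (Fin t → Fin m) with measure μ^{⊗t}, the random variable W(ω) = ∑_{j < t} P(ω j). Then the probability of the event { ω : |W(ω) − t/m| > 3ε²·t/(32m) } is at most 2·exp(−ε⁴·t/4608). -/

import Mathlib

open MeasureTheory


lemma pi_box {m t : ℕ} (μ : Measure (Fin m)) [IsProbabilityMeasure μ]
    (S : Finset (Fin t)) (B : Fin t → Set (Fin m)) :
    (Measure.pi fun _ : Fin t => μ) (⋂ i ∈ S, (fun ω : Fin t → Fin m => ω i) ⁻¹' B i)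
      = ∏ i ∈ S, μ (B i) := by
  classical
  have hset : (⋂ i ∈ S, (fun ω : Fin t → Fin m => ω i) ⁻¹' B i)
      = Set.pi Set.univ (fun i => if i ∈ S then B i else Set.univ) := by
    ext ω
    simp only [Set.mem_iInter, Set.mem_preimage, Set.mem_pi, Set.mem_univ, true_implies]
    constructor
    · intro h i; split <;> simp_all
    · intro h i hi; have := h i; simp only [hi, if_true] at this; exact this
  rw [hset, Measure.pi_pi]
  calc ∏ i : Fin t, μ (if i ∈ S then B i else Set.univ)
      = ∏ i : Fin t, (if i ∈ S then μ (B i) else 1) := by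
        refine Finset.prod_congr rfl fun i _ => ?_
        split <;> simp
    _ = ∏ i ∈ S, μ (B i) := by rw [Finset.prod_ite_mem, Finset.univ_inter]

lemma pi_map_eval' {m t : ℕ} (μ : Measure (Fin m)) [IsProbabilityMeasure μ] (i : Fin t) :
    Measure.map (fun ω : Fin t → Fin m => ω i) (Measure.pi fun _ : Fin t => μ) = μ := by
  ext s hs
  rw [Measure.map_apply (measurable_pi_apply i) hs]
  simpa using pi_box μ {i} (fun _ => s)

lemma pi_eval_iIndepFun {m t : ℕ} (μ : Measure (Fin m)) [IsProbabilityMeasure μ] :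
    ProbabilityTheory.iIndepFun
      (fun i (ω : Fin t → Fin m) => ω i) (Measure.pi fun _ : Fin t => μ) := by
  rw [ProbabilityTheory.iIndepFun_iff_measure_inter_preimage_eq_mul]
  intro S sets hsets
  rw [pi_box μ S sets]
  refine Finset.prod_congr rfl fun i hi => ?_
  have h1 : (Measure.pi fun _ : Fin t => μ) ((fun ω : Fin t → Fin m => ω i) ⁻¹' sets i)
      = μ (sets i) := by simpa using pi_box μ {i} (fun _ => sets i)
  exact h1.symm

set_option maxHeartbeats 1000000 in
/-- Concentration in the near-uniform case: if `μ` is within `L∞`-distance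
`ε/(4m)` of uniform, then the empirical weight `W(ω) = ∑_{j<t} P(ω j)` of `t`
i.i.d. samples deviates from `t/m` by more than `3ε²t/(32m)` with probability
at most `2·exp(−ε⁴t/4608)`. -/
theorem weight_concentration_uniform_case (m t : ℕ) (hm : 1 ≤ m) (ht : 1 ≤ t)
    (ε : ℝ) (hε₀ : 0 < ε) (hε₁ : ε ≤ 1)
    (μ : Measure (Fin m)) [IsProbabilityMeasure μ]
    (hclose : ∀ j : Fin m, |(μ {j}).toReal - 1 / m| ≤ ε / (4 * m)) :
    (Measure.pi fun _ : Fin t => μ)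
      {ω : Fin t → Fin m |
        3 * ε ^ 2 * t / (32 * m) <
          |(∑ j : Fin t, (μ {ω j}).toReal) - t / m|}
      ≤ ENNReal.ofReal (2 * Real.exp (-(ε ^ 4 * t / 4608))) := by
  classical
  have hm0 : (0:ℝ) < m := by exact_mod_cast hm
  have ht0 : (0:ℝ) < t := by exact_mod_cast ht
  set ν := Measure.pi fun _ : Fin t => μ with hν
  set P : Fin m → ℝ := fun j => (μ {j}).toReal with hPdef
  have hPnn : ∀ j, 0 ≤ P j := fun j => ENNReal.toReal_nonneg
  have hPsum : ∑ j, P j = 1 := by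
    have h1 := integral_fintype (μ := μ) (f := fun _ : Fin m => (1:ℝ)) (integrable_const 1)
    simpa [smul_eq_mul, measureReal_def] using h1.symm
  set a : ℝ := ∑ j, P j * P j with hadef
  -- a - 1/m = ∑ (P j - 1/m)^2
  have hcard : ((Finset.univ : Finset (Fin m)).card : ℝ) = m := by simp
  have hmm : (m:ℝ) * (1 / m) ^ 2 = 1 / m := by field_simp
  have hkey : a - 1 / m = ∑ j, (P j - 1 / m) ^ 2 := by
    have hcalc : ∑ j, (P j - 1 / m) ^ 2
        = (∑ j, P j * P j) - (2 / m) * (∑ j, P j) + (m:ℝ) * (1 / m) ^ 2 := by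
      calc ∑ j, (P j - 1 / m) ^ 2
          = ∑ j, (P j * P j - (2 / m) * P j + (1 / m) ^ 2) :=
            Finset.sum_congr rfl fun j _ => by ring
        _ = (∑ j, P j * P j) - (∑ j, (2 / m) * P j) + ∑ _j : Fin m, (1 / (m:ℝ)) ^ 2 := by
            rw [Finset.sum_add_distrib, Finset.sum_sub_distrib]
        _ = (∑ j, P j * P j) - (2 / m) * (∑ j, P j) + (m:ℝ) * (1 / m) ^ 2 := by
            rw [← Finset.mul_sum, Finset.sum_const, nsmul_eq_mul, Finset.card_univ,
              Fintype.card_fin]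
    have h2m : (2:ℝ) / m = 2 * (1 / m) := by ring
    rw [hcalc, hPsum, hmm, h2m, ← hadef]; ring
  have ha_nn : 0 ≤ a - 1 / m := by
    rw [hkey]; exact Finset.sum_nonneg fun j _ => sq_nonneg _
  have ha_ub : a - 1 / m ≤ ε ^ 2 / (16 * m) := by
    rw [hkey]
    calc ∑ j, (P j - 1 / m) ^ 2 ≤ ∑ _j : Fin m, (ε / (4 * m)) ^ 2 := by
          refine Finset.sum_le_sum fun j _ => ?_
          have h := abs_le.mp (hclose j)
          nlinarith [h.1, h.2]
      _ = (m:ℝ) * (ε / (4 * m)) ^ 2 := by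
          rw [Finset.sum_const, nsmul_eq_mul, Finset.card_univ, Fintype.card_fin]
      _ = ε ^ 2 / (16 * m) := by field_simp; ring
  set X : Fin m → ℝ := fun y => P y - a with hXdef
  have hXsum : ∑ y, P y * X y = 0 := by
    have : ∑ y, P y * X y = (∑ y, P y * P y) - (∑ y, P y) * a := by
      rw [Finset.sum_mul, ← Finset.sum_sub_distrib]
      exact Finset.sum_congr rfl fun y _ => by rw [hXdef]; ring
    rw [this, hPsum, ← hadef]; ring
  have hXb : ∀ y, |X y| ≤ ε / (2 * m) := by
    intro y
    have h1 := abs_le.mp (hclose y)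
    have e1 : ε / (4 * m) = 4 * (ε / (16 * m)) := by field_simp; ring
    have e2 : ε / (2 * m) = 8 * (ε / (16 * m)) := by field_simp; ring
    have e3 : ε ^ 2 / (16 * m) ≤ ε / (16 * m) := by
      gcongr
      nlinarith
    have hq0 : 0 ≤ ε / (16 * m) := by positivity
    have hau : a - 1 / m ≤ ε / (16 * m) := le_trans ha_ub e3
    have hlow : 1 / (m:ℝ) - 4 * (ε / (16 * m)) ≤ P y := by rw [← e1]; linarith [h1.1]
    have hhigh : P y ≤ 1 / (m:ℝ) + 4 * (ε / (16 * m)) := by rw [← e1] at *; linarith [h1.2]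
    rw [hXdef, abs_le, e2]
    constructor <;> simp only <;> linarith
  -- single-variable mgf bound
  have hmgf1 : ∀ l : ℝ, |l| ≤ (m:ℝ) / 16 →
      ∑ y, P y * Real.exp (l * X y) ≤ Real.exp (l ^ 2 * (ε / (2 * m)) ^ 2) := by
    intro l hl
    have hb : ∀ y, Real.exp (l * X y) ≤ 1 + l * X y + (l * X y) ^ 2 := by
      intro y
      have habs : |l * X y| ≤ 1 := by
        rw [abs_mul]
        calc |l| * |X y| ≤ ((m:ℝ) / 16) * (ε / (2 * m)) :=
              mul_le_mul hl (hXb y) (abs_nonneg _) (by positivity)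
          _ = ε / 32 := by field_simp; ring
          _ ≤ 1 := by linarith
      have h2 := (abs_le.mp (Real.abs_exp_sub_one_sub_id_le habs)).2
      linarith
    have hsq : ∑ y, P y * X y ^ 2 ≤ (ε / (2 * m)) ^ 2 := by
      calc ∑ y, P y * X y ^ 2 ≤ ∑ y, P y * (ε / (2 * m)) ^ 2 := by
            refine Finset.sum_le_sum fun y _ => ?_
            refine mul_le_mul_of_nonneg_left ?_ (hPnn y)
            have h := abs_le.mp (hXb y)
            exact sq_le_sq' h.1 h.2
        _ = (ε / (2 * m)) ^ 2 := by rw [← Finset.sum_mul, hPsum, one_mul]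
    calc ∑ y, P y * Real.exp (l * X y)
        ≤ ∑ y, P y * (1 + l * X y + (l * X y) ^ 2) :=
          Finset.sum_le_sum fun y _ => mul_le_mul_of_nonneg_left (hb y) (hPnn y)
      _ = (∑ y, P y) + l * (∑ y, P y * X y) + l ^ 2 * (∑ y, P y * X y ^ 2) := by
          rw [Finset.mul_sum, Finset.mul_sum, ← Finset.sum_add_distrib, ← Finset.sum_add_distrib]
          exact Finset.sum_congr rfl fun y _ => by ring
      _ = 1 + l ^ 2 * (∑ y, P y * X y ^ 2) := by rw [hPsum, hXsum]; ring
      _ ≤ Real.exp (l ^ 2 * (ε / (2 * m)) ^ 2) := by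
          have h1 := Real.add_one_le_exp (l ^ 2 * (ε / (2 * m)) ^ 2)
          have h2 : l ^ 2 * (∑ y, P y * X y ^ 2) ≤ l ^ 2 * (ε / (2 * m)) ^ 2 :=
            mul_le_mul_of_nonneg_left hsq (sq_nonneg l)
          linarith
  -- the centered coordinate variables
  set Z : Fin t → (Fin t → Fin m) → ℝ := fun i ω => X (ω i) with hZdef
  have hZmeas : ∀ i, Measurable (Z i) :=
    fun i => (measurable_of_countable X).comp (measurable_pi_apply i)
  have hZindep : ProbabilityTheory.iIndepFun Z ν :=
    (pi_eval_iIndepFun μ).comp (fun _ => X) (fun _ => measurable_of_countable X)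
  have hmgfZ : ∀ (i : Fin t) (l : ℝ),
      ProbabilityTheory.mgf (Z i) ν l = ∑ y, P y * Real.exp (l * X y) := by
    intro i l
    have hmap := pi_map_eval' μ i
    have h1 : ProbabilityTheory.mgf (Z i) ν l = ∫ y, Real.exp (l * X y) ∂μ := by
      rw [ProbabilityTheory.mgf, ← hmap,
        integral_map (measurable_pi_apply i).aemeasurable
          (measurable_of_countable _).aestronglyMeasurable]
    rw [h1, integral_fintype Integrable.of_finite]
    simp [smul_eq_mul, measureReal_def]
    rfl
  have hmgfsum : ∀ l : ℝ, |l| ≤ (m:ℝ) / 16 →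
      ProbabilityTheory.mgf (∑ i : Fin t, Z i) ν l
        ≤ Real.exp ((t:ℝ) * (l ^ 2 * (ε / (2 * m)) ^ 2)) := by
    intro l hl
    rw [ProbabilityTheory.iIndepFun.mgf_sum hZindep hZmeas Finset.univ]
    calc ∏ _i : Fin t, ProbabilityTheory.mgf (Z _i) ν l
        ≤ ∏ _i : Fin t, Real.exp (l ^ 2 * (ε / (2 * m)) ^ 2) :=
          Finset.prod_le_prod (fun i _ => ProbabilityTheory.mgf_nonneg)
            (fun i _ => by rw [hmgfZ i l]; exact hmgf1 l hl)
      _ = Real.exp ((t:ℝ) * (l ^ 2 * (ε / (2 * m)) ^ 2)) := by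
          rw [Finset.prod_const, ← Real.exp_nat_mul]; simp
  set s0 : ℝ := ε ^ 2 * t / (32 * m) with hs0def
  have hs0pos : 0 < s0 := by positivity
  set l0 : ℝ := (m:ℝ) / 16 with hl0def
  have hl0pos : 0 < l0 := by positivity
  have hexparg : -l0 * s0 + (t:ℝ) * (l0 ^ 2 * (ε / (2 * m)) ^ 2) = -(ε ^ 2 * t / 1024) := by
    rw [hl0def, hs0def]; field_simp; ring
  have hexple : Real.exp (-(ε ^ 2 * t / 1024)) ≤ Real.exp (-(ε ^ 4 * t / 4608)) := by
    apply Real.exp_le_exp.mpr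
    have h2 : ε ^ 2 ≤ 1 := by nlinarith
    have h4 : ε ^ 4 ≤ ε ^ 2 := by nlinarith [sq_nonneg ε, sq_nonneg (ε^2)]
    nlinarith [sq_nonneg ε]
  have hint : ∀ l : ℝ, Integrable (fun ω => Real.exp (l * (∑ i : Fin t, Z i) ω)) ν :=
    fun l => Integrable.of_finite
  -- upper tail
  have hup : ν {ω | s0 ≤ (∑ i : Fin t, Z i) ω}
      ≤ ENNReal.ofReal (Real.exp (-(ε ^ 4 * t / 4608))) := by
    have h := ProbabilityTheory.measure_ge_le_exp_mul_mgf (μ := ν) (X := ∑ i : Fin t, Z i)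
      (t := l0) s0 hl0pos.le (hint l0)
    have h2 : (ν {ω | s0 ≤ (∑ i : Fin t, Z i) ω}).toReal ≤ Real.exp (-(ε ^ 4 * t / 4608)) := by
      refine h.trans ?_
      calc Real.exp (-l0 * s0) * ProbabilityTheory.mgf (∑ i : Fin t, Z i) ν l0
          ≤ Real.exp (-l0 * s0) * Real.exp ((t:ℝ) * (l0 ^ 2 * (ε / (2 * m)) ^ 2)) := by
            refine mul_le_mul_of_nonneg_left (hmgfsum l0 ?_) (Real.exp_pos _).le
            rw [abs_of_pos hl0pos]
        _ = Real.exp (-(ε ^ 2 * t / 1024)) := by rw [← Real.exp_add, hexparg]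
        _ ≤ Real.exp (-(ε ^ 4 * t / 4608)) := hexple
    have := ENNReal.ofReal_le_ofReal h2
    rwa [ENNReal.ofReal_toReal (measure_ne_top _ _)] at this
  -- lower tail
  have hlo : ν {ω | (∑ i : Fin t, Z i) ω ≤ -s0}
      ≤ ENNReal.ofReal (Real.exp (-(ε ^ 4 * t / 4608))) := by
    have h := ProbabilityTheory.measure_le_le_exp_mul_mgf (μ := ν) (X := ∑ i : Fin t, Z i)
      (t := -l0) (-s0) (by linarith) (hint (-l0))
    have h2 : (ν {ω | (∑ i : Fin t, Z i) ω ≤ -s0}).toReal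
        ≤ Real.exp (-(ε ^ 4 * t / 4608)) := by
      refine h.trans ?_
      calc Real.exp (-(-l0) * -s0) * ProbabilityTheory.mgf (∑ i : Fin t, Z i) ν (-l0)
          ≤ Real.exp (-(-l0) * -s0) * Real.exp ((t:ℝ) * ((-l0) ^ 2 * (ε / (2 * m)) ^ 2)) := by
            refine mul_le_mul_of_nonneg_left (hmgfsum (-l0) ?_) (Real.exp_pos _).le
            rw [abs_neg, abs_of_pos hl0pos]
        _ = Real.exp (-(ε ^ 2 * t / 1024)) := by
            rw [← Real.exp_add]; congr 1; rw [← hexparg]; ring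
        _ ≤ Real.exp (-(ε ^ 4 * t / 4608)) := hexple
    have := ENNReal.ofReal_le_ofReal h2
    rwa [ENNReal.ofReal_toReal (measure_ne_top _ _)] at this
  -- event inclusion
  have hsub : {ω : Fin t → Fin m |
        3 * ε ^ 2 * t / (32 * m) < |(∑ j : Fin t, P (ω j)) - t / m|}
      ⊆ {ω | s0 ≤ (∑ i : Fin t, Z i) ω} ∪ {ω | (∑ i : Fin t, Z i) ω ≤ -s0} := by
    intro ω hω
    simp only [Set.mem_setOf_eq] at hω
    simp only [Set.mem_union, Set.mem_setOf_eq, Finset.sum_apply]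
    have hZω : ∑ i : Fin t, Z i ω = (∑ j : Fin t, P (ω j)) - t * a := by
      rw [hZdef]
      simp only [hXdef, Finset.sum_sub_distrib, Finset.sum_const, Finset.card_univ,
        Fintype.card_fin, nsmul_eq_mul]
    have h3s : 3 * ε ^ 2 * t / (32 * m) = 3 * s0 := by rw [hs0def]; ring
    have h2s : (t:ℝ) * (ε ^ 2 / (16 * m)) = 2 * s0 := by rw [hs0def]; field_simp; ring
    have hta : 0 ≤ (t:ℝ) * (a - 1 / m) := by positivity
    have hta2 : (t:ℝ) * (a - 1 / m) ≤ 2 * s0 := by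
      rw [← h2s]; exact mul_le_mul_of_nonneg_left ha_ub ht0.le
    have hdecomp : (∑ j : Fin t, P (ω j)) - (t:ℝ) / m
        = (∑ i : Fin t, Z i ω) + (t:ℝ) * (a - 1 / m) := by
      rw [hZω]; ring
    rw [h3s] at hω
    by_contra hcon
    push_neg at hcon
    obtain ⟨hc1, hc2⟩ := hcon
    rcases abs_cases ((∑ j : Fin t, P (ω j)) - (t:ℝ) / m) with ⟨he, _⟩ | ⟨he, _⟩ <;>
      rw [he] at hω <;>
      [skip; skip] <;>
      nlinarith [hdecomp, hc1, hc2, hta, hta2, hs0pos]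
  calc ν {ω : Fin t → Fin m |
        3 * ε ^ 2 * t / (32 * m) < |(∑ j : Fin t, P (ω j)) - t / m|}
      ≤ ν ({ω | s0 ≤ (∑ i : Fin t, Z i) ω} ∪ {ω | (∑ i : Fin t, Z i) ω ≤ -s0}) :=
        measure_mono hsub
    _ ≤ ν {ω | s0 ≤ (∑ i : Fin t, Z i) ω} + ν {ω | (∑ i : Fin t, Z i) ω ≤ -s0} :=
        measure_union_le _ _
    _ ≤ ENNReal.ofReal (Real.exp (-(ε ^ 4 * t / 4608)))
        + ENNReal.ofReal (Real.exp (-(ε ^ 4 * t / 4608))) := add_le_add hup hlo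
    _ = ENNReal.ofReal (2 * Real.exp (-(ε ^ 4 * t / 4608))) := by
        rw [← ENNReal.ofReal_add (Real.exp_pos _).le (Real.exp_pos _).le, two_mul]
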